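/- arXiv:2201.12022 — 2 statements merged into one kernel-verified Lean document; each statement's English description precedes it below -/
import Mathlib

section
/- Let G be a Lie group, M a smooth manifold, and σ : G × M → M a smooth left action of G on M. Fix x₀ ∈ M. Let g : [t_a, t_b] → G be a C¹ curve and η : [t_a, t_b] → 𝔤 (the tangent space of G at the identity e) a curve such that for every t, the velocity ġ(t) equals the differential at e of the right translation map h ↦ h·g(t) applied to η(t) (i.e. ġ(t) = T_e R_{g(t)} η(t)). Define x(t) = σ(g(t), x₀). Then for every t ∈ [t_a, t_b], the differential of the orbit map h ↦ σ(h, x₀) at g(t) applied to ġ(t) equals the differential of the orbit map h ↦ σ(h, x(t)) at the identity e applied to η(t); in symbols, D₁σ_(g(t),x₀)(ġ(t)) = D₁σ_(e,x(t))(η(t)). -/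
open Manifold Set

/-- **Proposition 1 (right trivialization and the orbit map).**
Let `G` be a Lie group, `M` a smooth manifold, and `σ : G × M → M` a smooth left
action of `G` on `M`. Fix `x₀ ∈ M`. Let `g : [tₐ, t_b] → G` be a `C¹` curve and
`η : [tₐ, t_b] → 𝔤 = T₁G` a curve such that `ġ(t) = T₁R_{g(t)} η(t)` for all
`t ∈ [tₐ, t_b]`, where `R_h` is right translation by `h`. Setting
`x(t) = σ(g(t), x₀)`, for every `t ∈ [tₐ, t_b]` we have
`D₁σ_(g(t),x₀)(ġ(t)) = D₁σ_(e,x(t))(η(t))`,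
i.e. the differential of the orbit map `h ↦ σ(h, x₀)` at `g(t)` applied to
`ġ(t)` equals the differential of the orbit map `h ↦ σ(h, x(t))` at the
identity applied to `η(t)`. -/
theorem orbit_map_right_trivialized_velocity
    {E : Type*} [NormedAddCommGroup E] [NormedSpace ℝ E]
    {HG : Type*} [TopologicalSpace HG] (I : ModelWithCorners ℝ E HG)
    {G : Type*} [TopologicalSpace G] [ChartedSpace HG G] [Group G]
    [IsManifold I (⊤ : ℕ∞) G] [LieGroup I (⊤ : ℕ∞) G]
    {E' : Type*} [NormedAddCommGroup E'] [NormedSpace ℝ E']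
    {HM : Type*} [TopologicalSpace HM] (I' : ModelWithCorners ℝ E' HM)
    {M : Type*} [TopologicalSpace M] [ChartedSpace HM M]
    [IsManifold I' (⊤ : ℕ∞) M]
    (σ : G → M → M)
    (hσ : ContMDiff (I.prod I') I' (⊤ : ℕ∞) fun p : G × M => σ p.1 p.2)
    (hσ_one : ∀ x : M, σ 1 x = x)
    (hσ_mul : ∀ (a b : G) (x : M), σ (a * b) x = σ a (σ b x))
    (x₀ : M) (ta tb : ℝ)
    (g : ℝ → G) (hg : ContMDiffOn 𝓘(ℝ, ℝ) I 1 g (Icc ta tb))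
    (η : ℝ → TangentSpace I (1 : G))
    (hη : ∀ t ∈ Icc ta tb,
      mfderiv 𝓘(ℝ, ℝ) I g t (1 : ℝ) = mfderiv I I (fun h : G => h * g t) 1 (η t)) :
    ∀ t ∈ Icc ta tb,
      mfderiv I I' (fun h : G => σ h x₀) (g t) (mfderiv 𝓘(ℝ, ℝ) I g t (1 : ℝ))
        = mfderiv I I' (fun h : G => σ h (σ (g t) x₀)) 1 (η t) := by
  intro t ht
  have horb : ∀ x : M, ContMDiff I I' (⊤ : ℕ∞) (fun h : G => σ h x) := fun x =>
    hσ.comp (contMDiff_id.prodMk contMDiff_const)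
  have hR : ContMDiff I I (⊤ : ℕ∞) (fun h : G => h * g t) := contMDiff_mul_right
  have hcomp : (fun h : G => σ h (σ (g t) x₀))
      = (fun h : G => σ h x₀) ∘ (fun h : G => h * g t) := by
    funext h
    simp [Function.comp, hσ_mul]
  rw [hη t ht, hcomp,
    mfderiv_comp (1 : G) ((horb x₀).mdifferentiableAt (by simp))
      (hR.mdifferentiableAt (by simp))]
  rw [show (1 : G) * g t = g t from one_mul _]
  rfl
end

section
/- Regularity of the regularized pendulum Lagrangian: let x₀ ∈ ℝ³ with x₀ ≠ 0, and let m ≠ 0 and M ≠ 0 be real numbers. The symmetric bilinear form on ℝ³ given by B(η, ζ) = m (η × x₀) · (ζ × x₀) + M (η · x₀)(ζ · x₀) (the velocity Hessian of ℓ^reg(g, η) = (m/2)‖η × x₀‖² + (M/2)(η · x₀)² + γ·(g x₀)) is nondegenerate: if B(η, ζ) = 0 for all ζ ∈ ℝ³ then η = 0. Moreover, ℓ^reg agrees with the singular trivialized Lagrangian ℓ^G on the constraint distribution: for every η with η · x₀ = 0, (m/2)‖η × x₀‖² + (M/2)(η · x₀)² = (m/2)‖η × x₀‖². -/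
open Matrix

/-- The Euclidean norm of a vector in `ℝ³`. -/
noncomputable def enorm3 (w : Fin 3 → ℝ) : ℝ :=
  ‖(EuclideanSpace.equiv (Fin 3) ℝ).symm w‖

/-- **Regularity of the regularized pendulum Lagrangian.** For `x₀ ∈ ℝ³`,
`x₀ ≠ 0`, and reals `m ≠ 0`, `M ≠ 0`, the symmetric bilinear form
`B(η, ζ) = m (η × x₀) · (ζ × x₀) + M (η · x₀)(ζ · x₀)` (the velocity Hessian of
`ℓ^reg(g, η) = (m/2)‖η × x₀‖² + (M/2)(η · x₀)² + γ · (g x₀)`) is nondegenerate: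
if `B(η, ζ) = 0` for all `ζ` then `η = 0`. Moreover `ℓ^reg` agrees with the
singular trivialized Lagrangian `ℓ^G` on the constraint distribution: whenever
`η · x₀ = 0`, `(m/2)‖η × x₀‖² + (M/2)(η · x₀)² = (m/2)‖η × x₀‖²`. -/
theorem regularized_pendulum_lagrangian_regular (x₀ : Fin 3 → ℝ) (hx₀ : x₀ ≠ 0)
    (m M : ℝ) (hm : m ≠ 0) (hM : M ≠ 0) :
    (∀ η : Fin 3 → ℝ,
      (∀ ζ : Fin 3 → ℝ,
        m * ((η ⨯₃ x₀) ⬝ᵥ (ζ ⨯₃ x₀)) + M * (η ⬝ᵥ x₀) * (ζ ⬝ᵥ x₀) = 0) → η = 0) ∧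
    (∀ η : Fin 3 → ℝ, η ⬝ᵥ x₀ = 0 →
      m / 2 * enorm3 (η ⨯₃ x₀) ^ 2 + M / 2 * (η ⬝ᵥ x₀) ^ 2
        = m / 2 * enorm3 (η ⨯₃ x₀) ^ 2) := by
  constructor
  · intro η hB
    have hx : x₀ 0 ^ 2 + x₀ 1 ^ 2 + x₀ 2 ^ 2 ≠ 0 := by
      intro h
      apply hx₀
      funext i
      have h0 : x₀ 0 = 0 := by nlinarith [sq_nonneg (x₀ 0), sq_nonneg (x₀ 1), sq_nonneg (x₀ 2)]
      have h1 : x₀ 1 = 0 := by nlinarith [sq_nonneg (x₀ 0), sq_nonneg (x₀ 1), sq_nonneg (x₀ 2)]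
      have h2 : x₀ 2 = 0 := by nlinarith [sq_nonneg (x₀ 0), sq_nonneg (x₀ 1), sq_nonneg (x₀ 2)]
      fin_cases i <;> assumption
    -- take ζ = x₀ : get η ⬝ x₀ = 0
    have h1 := hB x₀
    simp only [crossProduct, dotProduct, Fin.sum_univ_three, LinearMap.mk₂_apply,
      Matrix.cons_val_zero, Matrix.cons_val_one, Matrix.head_cons,
      Matrix.cons_val_two, Matrix.tail_cons] at h1
    have horth : η 0 * x₀ 0 + η 1 * x₀ 1 + η 2 * x₀ 2 = 0 := by
      have : M * (η 0 * x₀ 0 + η 1 * x₀ 1 + η 2 * x₀ 2) *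
          (x₀ 0 ^ 2 + x₀ 1 ^ 2 + x₀ 2 ^ 2) = 0 := by linear_combination h1
      rcases mul_eq_zero.mp this with h | h
      · rcases mul_eq_zero.mp h with h' | h'
        · exact absurd h' hM
        · exact h'
      · exact absurd h hx
    -- take ζ = η : get m ‖η × x₀‖² = 0
    have h2 := hB η
    simp only [crossProduct, dotProduct, Fin.sum_univ_three, LinearMap.mk₂_apply,
      Matrix.cons_val_zero, Matrix.cons_val_one, Matrix.head_cons,
      Matrix.cons_val_two, Matrix.tail_cons] at h2
    have hcross : (η 1 * x₀ 2 - η 2 * x₀ 1) = 0 ∧ (η 2 * x₀ 0 - η 0 * x₀ 2) = 0 ∧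
        (η 0 * x₀ 1 - η 1 * x₀ 0) = 0 := by
      have hsum : (η 1 * x₀ 2 - η 2 * x₀ 1) ^ 2 + (η 2 * x₀ 0 - η 0 * x₀ 2) ^ 2 +
          (η 0 * x₀ 1 - η 1 * x₀ 0) ^ 2 = 0 := by
        have hm2 : m * ((η 1 * x₀ 2 - η 2 * x₀ 1) ^ 2 + (η 2 * x₀ 0 - η 0 * x₀ 2) ^ 2 +
            (η 0 * x₀ 1 - η 1 * x₀ 0) ^ 2) = 0 := by
          linear_combination h2 - M * (η 0 * x₀ 0 + η 1 * x₀ 1 + η 2 * x₀ 2) * horth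
        exact (mul_eq_zero.mp hm2).resolve_left hm
      constructor
      · nlinarith [sq_nonneg (η 1 * x₀ 2 - η 2 * x₀ 1), sq_nonneg (η 2 * x₀ 0 - η 0 * x₀ 2),
          sq_nonneg (η 0 * x₀ 1 - η 1 * x₀ 0)]
      constructor
      · nlinarith [sq_nonneg (η 1 * x₀ 2 - η 2 * x₀ 1), sq_nonneg (η 2 * x₀ 0 - η 0 * x₀ 2),
          sq_nonneg (η 0 * x₀ 1 - η 1 * x₀ 0)]
      · nlinarith [sq_nonneg (η 1 * x₀ 2 - η 2 * x₀ 1), sq_nonneg (η 2 * x₀ 0 - η 0 * x₀ 2),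
          sq_nonneg (η 0 * x₀ 1 - η 1 * x₀ 0)]
    obtain ⟨c1, c2, c3⟩ := hcross
    -- η parallel to x₀ and orthogonal to x₀ ⇒ η = 0
    have h00 : η 0 * (x₀ 0 ^ 2 + x₀ 1 ^ 2 + x₀ 2 ^ 2) = 0 := by
      linear_combination x₀ 0 * horth + x₀ 1 * c3 - x₀ 2 * c2
    have h11 : η 1 * (x₀ 0 ^ 2 + x₀ 1 ^ 2 + x₀ 2 ^ 2) = 0 := by
      linear_combination x₀ 1 * horth - x₀ 0 * c3 + x₀ 2 * c1
    have h22 : η 2 * (x₀ 0 ^ 2 + x₀ 1 ^ 2 + x₀ 2 ^ 2) = 0 := by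
      linear_combination x₀ 2 * horth + x₀ 0 * c2 - x₀ 1 * c1
    funext i
    fin_cases i
    · exact (mul_eq_zero.mp h00).resolve_right hx
    · exact (mul_eq_zero.mp h11).resolve_right hx
    · exact (mul_eq_zero.mp h22).resolve_right hx
  · intro η hη
    rw [hη]
    ring
end
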